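/- Let m ≥ 1, let Σ be an m×m real symmetric positive definite matrix with symmetric positive definite square root Σ^{1/2}, let t_1,…,t_m be real numbers, set t_{m+1} := 0 and c_i := t_i − t_{i+1}, and define ψ : M_m(ℝ) → ℂ by ψ(T) := ∏_{i=1}^m det(E_iᵀ(I_m − i·Σ^{1/2} T Σ^{1/2})E_i)^{c_i}, using principal-branch complex powers. Let T be an m×m real matrix such that det(E_iᵀ(I_m − i·Σ^{1/2} T Σ^{1/2})E_i) does not lie in (−∞,0] for each i = 1,…,m. Then ψ is Fréchet differentiable (over ℝ) at T, and Dψ(T)(H) = −i·(∑_{i=1}^m c_i · tr(A_i H))·ψ(T) for every H ∈ M_m(ℝ), where A_i := Σ^{1/2} E_i (E_iᵀ(I_m − i·Σ^{1/2} T Σ^{1/2})E_i)^{−1} E_iᵀ Σ^{1/2}. -/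

import Mathlib

open MeasureTheory Matrix Finset

noncomputable section

/-- Measurable space structure on real matrices (the product σ-algebra). -/
instance matrixMeasurableSpace (m n : ℕ) : MeasurableSpace (Matrix (Fin m) (Fin n) ℝ) :=
  MeasurableSpace.pi

attribute [local instance] Matrix.normedAddCommGroup Matrix.normedSpace

/-- `nth κ j` is `κ j` when `j < m` and `0` otherwise. -/
def nth {m : ℕ} (κ : Fin m → ℕ) (j : ℕ) : ℕ := if h : j < m then κ ⟨j, h⟩ else 0

/-- Determinant of the `k × k` leading principal submatrix (for `k ≤ m`). -/
def lpm {R : Type*} [CommRing R] {m : ℕ} (A : Matrix (Fin m) (Fin m) R) (k : ℕ) : R :=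
  (Matrix.of fun r s : Fin (min k m) =>
    A (Fin.castLE (min_le_right k m) r) (Fin.castLE (min_le_right k m) s)).det

/-- The generalized power (highest weight vector)
`q_κ(A) = det(A)^{k_m} ∏_{i=1}^{m-1} det(A_i)^{k_i - k_{i+1}}`. -/
def gpow {R : Type*} [CommRing R] {m : ℕ} (κ : Fin m → ℕ) (A : Matrix (Fin m) (Fin m) R) : R :=
  ∏ i : Fin m, lpm A ((i : ℕ) + 1) ^ (nth κ (i : ℕ) - nth κ ((i : ℕ) + 1))

/-- Lebesgue measure on symmetric matrices: the pushforward of Lebesgue measure on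
`ℝ^{m(m+1)/2}` under the coordinates `(x_{ij})_{i ≤ j}`. -/
def symVolume (m : ℕ) : Measure (Matrix (Fin m) (Fin m) ℝ) :=
  Measure.map (fun x : ({p : Fin m × Fin m // p.1 ≤ p.2} → ℝ) =>
    Matrix.of fun i j => if h : i ≤ j then x ⟨(i, j), h⟩ else x ⟨(j, i), le_of_not_ge h⟩)
    volume

/-- The open cone of symmetric positive definite real matrices. -/
def PDcone (m : ℕ) : Set (Matrix (Fin m) (Fin m) ℝ) := {X | X.PosDef}

/-- The `m × k` matrix formed by the first `k` columns of the identity matrix. -/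
def Emat (R : Type*) [Zero R] [One R] (m k : ℕ) : Matrix (Fin m) (Fin k) R :=
  Matrix.of fun r c => if (r : ℕ) = (c : ℕ) then 1 else 0

/-- The generalized gamma function of weight `κ`:
`Γ_m[a, κ] = π^{m(m-1)/4} ∏_{i=1}^m Γ(a + k_i - (i-1)/2)`. -/
def GammaI (m : ℕ) (κ : Fin m → ℕ) (a : ℝ) : ℝ :=
  Real.pi ^ (((m * (m - 1) : ℕ) : ℝ) / 4) *
    ∏ i : Fin m, Real.Gamma (a + κ i - (i : ℝ) / 2)

/-- Kotz's generalized gamma function of weight `-κ`: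
`Γ_m[a, -κ] = π^{m(m-1)/4} ∏_{i=1}^m Γ(a - k_i - (m-i)/2)`. -/
def GammaII (m : ℕ) (κ : Fin m → ℕ) (a : ℝ) : ℝ :=
  Real.pi ^ (((m * (m - 1) : ℕ) : ℝ) / 4) *
    ∏ i : Fin m, Real.Gamma (a - κ i - ((m : ℝ) - 1 - (i : ℝ)) / 2)

/-- The Riesz type I density with parameters `(a, κ, Σ)`. -/
def densityI {m : ℕ} (κ : Fin m → ℕ) (Sig : Matrix (Fin m) (Fin m) ℝ) (a : ℝ)
    (X : Matrix (Fin m) (Fin m) ℝ) : ℝ :=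
  Real.exp (-((Sig⁻¹ * X).trace)) * X.det ^ (a - ((m : ℝ) + 1) / 2) * gpow κ X /
    (GammaI m κ a * Sig.det ^ a * gpow κ Sig)

/-- The Riesz type II density with parameters `(a, κ, Σ)`. -/
def densityII {m : ℕ} (κ : Fin m → ℕ) (Sig : Matrix (Fin m) (Fin m) ℝ) (a : ℝ)
    (X : Matrix (Fin m) (Fin m) ℝ) : ℝ :=
  Real.exp (-((Sig⁻¹ * X).trace)) * X.det ^ (a - ((m : ℝ) + 1) / 2) * gpow κ X⁻¹ /
    (GammaII m κ a * Sig.det ^ a * gpow κ Sig⁻¹)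

/-- Entrywise coercion of a real matrix to a complex matrix. -/
def cmat {m : ℕ} (A : Matrix (Fin m) (Fin m) ℝ) : Matrix (Fin m) (Fin m) ℂ :=
  A.map Complex.ofReal

/-- `nthR t j` is `t j` when `j < m` and `0` otherwise. -/
def nthR {m : ℕ} (t : Fin m → ℝ) (j : ℕ) : ℝ := if h : j < m then t ⟨j, h⟩ else 0

/-- The `k × k` leading principal submatrix `E_kᵀ M E_k` of a complex matrix. -/
def lpsub {m : ℕ} (M : Matrix (Fin m) (Fin m) ℂ) (k : ℕ) : Matrix (Fin k) (Fin k) ℂ :=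
  (Emat ℂ m k)ᵀ * M * Emat ℂ m k

/-- The complex matrix `I_m - i · Σ^{1/2} T Σ^{1/2}`. -/
def Rmat {m : ℕ} (Shalf T : Matrix (Fin m) (Fin m) ℝ) : Matrix (Fin m) (Fin m) ℂ :=
  1 - Complex.I • (cmat Shalf * cmat T * cmat Shalf)

/-- `A_i = Σ^{1/2} E_i (E_iᵀ (I_m - i Σ^{1/2} T Σ^{1/2}) E_i)⁻¹ E_iᵀ Σ^{1/2}`. -/
def Amat {m : ℕ} (Shalf T : Matrix (Fin m) (Fin m) ℝ) (i : Fin m) :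
    Matrix (Fin m) (Fin m) ℂ :=
  cmat Shalf * Emat ℂ m ((i : ℕ) + 1) * (lpsub (Rmat Shalf T) ((i : ℕ) + 1))⁻¹ *
    (Emat ℂ m ((i : ℕ) + 1))ᵀ * cmat Shalf

/-- The characteristic function of the Riesz type I distribution,
`φ(T) = ∏_i det(E_iᵀ (I - i Σ^{1/2} T Σ^{1/2}) E_i)^{-(t_i - t_{i+1})}`. -/
def phiI {m : ℕ} (Shalf : Matrix (Fin m) (Fin m) ℝ) (t : Fin m → ℝ)
    (T : Matrix (Fin m) (Fin m) ℝ) : ℂ :=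
  ∏ i : Fin m,
    (lpsub (Rmat Shalf T) ((i : ℕ) + 1)).det ^ ((-(t i - nthR t ((i : ℕ) + 1)) : ℝ) : ℂ)

/-- The characteristic function of the Riesz type II distribution,
`ψ(T) = ∏_i det(E_iᵀ (I - i Σ^{1/2} T Σ^{1/2}) E_i)^{(t_i - t_{i+1})}`. -/
def psiII {m : ℕ} (Shalf : Matrix (Fin m) (Fin m) ℝ) (t : Fin m → ℝ)
    (T : Matrix (Fin m) (Fin m) ℝ) : ℂ :=
  ∏ i : Fin m,
    (lpsub (Rmat Shalf T) ((i : ℕ) + 1)).det ^ (((t i - nthR t ((i : ℕ) + 1)) : ℝ) : ℂ)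

/-! ### Auxiliary lemmas for the derivative computation -/

section DetDeriv

open Matrix

/-- The determinant as a continuous multilinear map in the rows. -/
def detCMM (k : ℕ) : ContinuousMultilinearMap ℂ (fun _ : Fin k => (Fin k → ℂ)) ℂ where
  toMultilinearMap := (Matrix.detRowAlternating (R := ℂ) (n := Fin k)).toMultilinearMap
  cont := by
    show Continuous fun M : Matrix (Fin k) (Fin k) ℂ => M.det
    exact continuous_id.matrix_det

lemma sum_updateRow_det {k : ℕ} (M H : Matrix (Fin k) (Fin k) ℂ) (hM : M.det ≠ 0) :
    ∑ i, (M.updateRow i (H i)).det = M.det * (M⁻¹ * H).trace := by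
  have hrow : ∀ i, (M.updateRow i (H i)).det = ∑ j, H i j * M.adjugate j i := by
    intro i
    have h1 : H i = ∑ j, H i j • (Pi.single j 1 : Fin k → ℂ) := by
      funext l
      simp [Finset.sum_apply, Pi.single_apply]
    have h2 := MultilinearMap.map_update_sum
      ((Matrix.detRowAlternating (R := ℂ) (n := Fin k)).toMultilinearMap)
      Finset.univ i (fun j => H i j • (Pi.single j 1 : Fin k → ℂ)) M
    calc (M.updateRow i (H i)).det
        = ∑ j, (M.updateRow i (H i j • (Pi.single j 1 : Fin k → ℂ))).det := by
          conv_lhs => rw [h1]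
          exact h2
      _ = ∑ j, H i j * M.adjugate j i := by
          simp [Matrix.det_updateRow_smul, Matrix.adjugate_apply]
  have hsum : ∑ i, (M.updateRow i (H i)).det = (M.adjugate * H).trace := by
    simp only [hrow, Matrix.trace, Matrix.diag_apply, Matrix.mul_apply]
    rw [Finset.sum_comm]
    exact Finset.sum_congr rfl fun p _ => Finset.sum_congr rfl fun q _ => mul_comm _ _
  have hadj : M.adjugate = M.det • M⁻¹ := by
    rw [Matrix.inv_def, smul_smul, Ring.inverse_eq_inv', mul_inv_cancel₀ hM, one_smul]
  rw [hsum, hadj, Matrix.smul_mul, Matrix.trace_smul, smul_eq_mul]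

/-- The derivative of the determinant at an invertible matrix, as a continuous linear map. -/
def detDeriv {k : ℕ} (M : Matrix (Fin k) (Fin k) ℂ) : Matrix (Fin k) (Fin k) ℂ →L[ℂ] ℂ :=
  LinearMap.toContinuousLinearMap
    (M.det • ((Matrix.traceLinearMap (Fin k) ℂ ℂ).comp (LinearMap.mulLeft ℂ M⁻¹)))

lemma detDeriv_apply {k : ℕ} (M H : Matrix (Fin k) (Fin k) ℂ) :
    detDeriv M H = M.det * (M⁻¹ * H).trace := rfl

lemma det_hasFDerivAt {k : ℕ} (M : Matrix (Fin k) (Fin k) ℂ) (hM : M.det ≠ 0) :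
    HasFDerivAt (fun A : Matrix (Fin k) (Fin k) ℂ => A.det) (detDeriv M) M := by
  have h := (detCMM k).hasFDerivAt (x := fun i j => M i j)
  have he : ((detCMM k).linearDeriv fun i j => M i j) = detDeriv M := by
    refine ContinuousLinearMap.ext fun H => ?_
    rw [ContinuousMultilinearMap.linearDeriv_apply]
    exact sum_updateRow_det M H hM
  exact he ▸ h

end DetDeriv

section Affine

open Matrix

lemma cmat_add {m : ℕ} (A B : Matrix (Fin m) (Fin m) ℝ) :
    cmat (A + B) = cmat A + cmat B := by
  ext i j; simp [cmat]

lemma cmat_smul {m : ℕ} (r : ℝ) (A : Matrix (Fin m) (Fin m) ℝ) :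
    cmat (r • A) = r • cmat A := by
  ext i j; simp [cmat, Complex.real_smul]

/-- The linear part of `T ↦ E_kᵀ (I - i S T S) E_k`, as a continuous linear map. -/
def phiLin {m : ℕ} (Shalf : Matrix (Fin m) (Fin m) ℝ) (k : ℕ) :
    Matrix (Fin m) (Fin m) ℝ →L[ℝ] Matrix (Fin k) (Fin k) ℂ :=
  LinearMap.toContinuousLinearMap
    { toFun := fun H => (-Complex.I) • lpsub (cmat Shalf * cmat H * cmat Shalf) k
      map_add' := by
        intro A B
        simp [cmat_add, lpsub, Matrix.mul_add, Matrix.add_mul, smul_add]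
      map_smul' := by
        intro r A
        simp only [cmat_smul, Matrix.mul_smul, Matrix.smul_mul, RingHom.id_apply]
        rw [smul_comm]
        congr 1
        simp [lpsub, Matrix.mul_smul, Matrix.smul_mul] }

lemma phiLin_apply {m : ℕ} (Shalf : Matrix (Fin m) (Fin m) ℝ) (k : ℕ)
    (H : Matrix (Fin m) (Fin m) ℝ) :
    phiLin Shalf k H = (-Complex.I) • lpsub (cmat Shalf * cmat H * cmat Shalf) k := rfl

lemma lpsub_hasFDerivAt {m : ℕ} (Shalf : Matrix (Fin m) (Fin m) ℝ) (k : ℕ)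
    (T : Matrix (Fin m) (Fin m) ℝ) :
    HasFDerivAt (fun T' => lpsub (Rmat Shalf T') k) (phiLin Shalf k) T := by
  have hfun : (fun T' => lpsub (Rmat Shalf T') k)
      = fun T' => lpsub (1 : Matrix (Fin m) (Fin m) ℂ) k + phiLin Shalf k T' := by
    funext T'
    rw [phiLin_apply]
    simp [Rmat, lpsub, Matrix.sub_mul, Matrix.mul_sub, Matrix.smul_mul, Matrix.mul_smul,
      sub_eq_add_neg, neg_smul, Matrix.add_mul, Matrix.mul_add, Matrix.neg_mul, Matrix.mul_neg,
      Matrix.mul_one, Matrix.one_mul]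
  rw [hfun]
  exact (phiLin Shalf k).hasFDerivAt.const_add _

lemma trace_inv_lpsub {m k : ℕ} (S : Matrix (Fin m) (Fin m) ℂ)
    (B : Matrix (Fin k) (Fin k) ℂ) (H : Matrix (Fin m) (Fin m) ℂ) :
    (B * lpsub (S * H * S) k).trace
      = (S * Emat ℂ m k * B * (Emat ℂ m k)ᵀ * S * H).trace := by
  unfold lpsub
  set E := Emat ℂ m k with hE
  calc (B * ((E)ᵀ * (S * H * S) * E)).trace
      = ((B * ((E)ᵀ * (S * H * S))) * E).trace :=
        congrArg Matrix.trace (Matrix.mul_assoc B _ E).symm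
    _ = (E * (B * ((E)ᵀ * (S * H * S)))).trace := Matrix.trace_mul_comm _ _
    _ = ((E * B * (E)ᵀ * (S * H)) * S).trace := by
          simp only [Matrix.mul_assoc]
    _ = (S * (E * B * (E)ᵀ * (S * H))).trace := Matrix.trace_mul_comm _ _
    _ = (S * E * B * (E)ᵀ * S * H).trace := by
          simp only [Matrix.mul_assoc]

end Affine

/-- First Fréchet derivative of the characteristic function of the Riesz type II
distribution: `Dψ(T)(H) = -i (∑_i (t_i - t_{i+1}) tr(A_i H)) ψ(T)`. -/
theorem riesz_typeII_charfun_deriv {m : ℕ} (hm : 1 ≤ m)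
    (Sig Shalf : Matrix (Fin m) (Fin m) ℝ)
    (hSig : Sig.PosDef) (hShalf : Shalf.PosDef) (hShalf_symm : Shalf.IsSymm)
    (hsq : Shalf * Shalf = Sig)
    (t : Fin m → ℝ)
    (T : Matrix (Fin m) (Fin m) ℝ)
    (hT : ∀ i : Fin m, (lpsub (Rmat Shalf T) ((i : ℕ) + 1)).det ∈ Complex.slitPlane) :
    ∃ L : Matrix (Fin m) (Fin m) ℝ →L[ℝ] ℂ,
      HasFDerivAt (psiII Shalf t) L T ∧
        ∀ H : Matrix (Fin m) (Fin m) ℝ,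
          L H = -Complex.I
              * (∑ i : Fin m, ((t i - nthR t ((i : ℕ) + 1) : ℝ) : ℂ)
                  * (Amat Shalf T i * cmat H).trace)
              * psiII Shalf t T := by
  classical
  have hne : ∀ i : Fin m, (lpsub (Rmat Shalf T) ((i : ℕ) + 1)).det ≠ 0 := fun i =>
    Complex.slitPlane_ne_zero (hT i)
  have hfi : ∀ i : Fin m, HasFDerivAt
      (fun T' : Matrix (Fin m) (Fin m) ℝ =>
        (lpsub (Rmat Shalf T') ((i : ℕ) + 1)).det ^ (((t i - nthR t ((i : ℕ) + 1) : ℝ)) : ℂ))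
      (((ContinuousLinearMap.smulRight (1 : ℂ →L[ℂ] ℂ)
            ((((t i - nthR t ((i : ℕ) + 1) : ℝ)) : ℂ)
              * (lpsub (Rmat Shalf T) ((i : ℕ) + 1)).det
                  ^ ((((t i - nthR t ((i : ℕ) + 1) : ℝ)) : ℂ) - 1))).restrictScalars ℝ).comp
        (((detDeriv (lpsub (Rmat Shalf T) ((i : ℕ) + 1))).restrictScalars ℝ).comp
          (phiLin Shalf ((i : ℕ) + 1)))) T := by
    intro i
    have hlin := lpsub_hasFDerivAt Shalf ((i : ℕ) + 1) T
    have hdet := det_hasFDerivAt _ (hne i)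
    have hcomp := (hdet.restrictScalars ℝ).comp T hlin
    have hpow : HasDerivAt (fun z : ℂ => z ^ ((((t i - nthR t ((i : ℕ) + 1) : ℝ)) : ℂ)))
        (((((t i - nthR t ((i : ℕ) + 1) : ℝ)) : ℂ))
          * (lpsub (Rmat Shalf T) ((i : ℕ) + 1)).det
              ^ (((((t i - nthR t ((i : ℕ) + 1) : ℝ)) : ℂ)) - 1))
        (lpsub (Rmat Shalf T) ((i : ℕ) + 1)).det :=
      (Complex.hasStrictDerivAt_cpow_const (hT i)).hasDerivAt
    have hpowF := (hasDerivAt_iff_hasFDerivAt.mp hpow).restrictScalars ℝ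
    exact hpowF.comp T hcomp
  have hprod := HasFDerivAt.finset_prod (u := (Finset.univ : Finset (Fin m)))
      (fun i _ => hfi i)
  refine ⟨_, hprod, fun H => ?_⟩
  have hsumap : ∀ {E : Type} [NormedAddCommGroup E] [NormedSpace ℝ E] (s : Finset (Fin m))
      (f : Fin m → E →L[ℝ] ℂ) (x : E), (∑ i ∈ s, f i) x = ∑ i ∈ s, f i x :=
    fun s f x => ContinuousLinearMap.sum_apply s f x
  refine (hsumap _ _ _).trans ?_
  rw [Finset.mul_sum, Finset.sum_mul]
  refine Finset.sum_congr rfl fun i _ => ?_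
  have hsmulap : ∀ {E : Type} [NormedAddCommGroup E] [NormedSpace ℝ E] (c : ℂ)
      (f : E →L[ℝ] ℂ) (x : E), (c • f) x = c • f x :=
    fun c f x => rfl
  refine (hsmulap _ _ _).trans ?_
  rw [smul_eq_mul]
  have happ : (((ContinuousLinearMap.smulRight (1 : ℂ →L[ℂ] ℂ)
            ((((t i - nthR t ((i : ℕ) + 1) : ℝ)) : ℂ)
              * (lpsub (Rmat Shalf T) ((i : ℕ) + 1)).det
                  ^ ((((t i - nthR t ((i : ℕ) + 1) : ℝ)) : ℂ) - 1))).restrictScalars ℝ).comp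
        (((detDeriv (lpsub (Rmat Shalf T) ((i : ℕ) + 1))).restrictScalars ℝ).comp
          (phiLin Shalf ((i : ℕ) + 1)))) H
      = ((lpsub (Rmat Shalf T) ((i : ℕ) + 1)).det
          * (-Complex.I
            * ((lpsub (Rmat Shalf T) ((i : ℕ) + 1))⁻¹
                * lpsub (cmat Shalf * cmat H * cmat Shalf) ((i : ℕ) + 1)).trace))
        * ((((t i - nthR t ((i : ℕ) + 1) : ℝ)) : ℂ)
            * (lpsub (Rmat Shalf T) ((i : ℕ) + 1)).det
                ^ ((((t i - nthR t ((i : ℕ) + 1) : ℝ)) : ℂ) - 1) ) := by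
    simp only [ContinuousLinearMap.comp_apply, ContinuousLinearMap.coe_restrictScalars',
      ContinuousLinearMap.smulRight_apply, ContinuousLinearMap.one_apply, smul_eq_mul,
      phiLin_apply, detDeriv_apply, Matrix.mul_smul, Matrix.mul_neg, Matrix.trace_neg,
      Matrix.trace_smul, neg_smul]
    ring
  refine (congrArg (HMul.hMul (∏ j ∈ Finset.univ.erase i,
    (lpsub (Rmat Shalf T) ((j : ℕ) + 1)).det ^ (((t j - nthR t ((j : ℕ) + 1) : ℝ)) : ℂ))) happ).trans ?_
  have htr : ((lpsub (Rmat Shalf T) ((i : ℕ) + 1))⁻¹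
      * lpsub (cmat Shalf * cmat H * cmat Shalf) ((i : ℕ) + 1)).trace
      = (Amat Shalf T i * cmat H).trace := by
    rw [trace_inv_lpsub]
    rfl
  rw [htr]
  have hP : (∏ j ∈ Finset.univ.erase i,
        (lpsub (Rmat Shalf T) ((j : ℕ) + 1)).det ^ (((t j - nthR t ((j : ℕ) + 1) : ℝ)) : ℂ))
      * (lpsub (Rmat Shalf T) ((i : ℕ) + 1)).det ^ (((t i - nthR t ((i : ℕ) + 1) : ℝ)) : ℂ)
      = psiII Shalf t T := by
    rw [Finset.prod_erase_mul _ _ (Finset.mem_univ i)]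
    rfl
  have hd : (lpsub (Rmat Shalf T) ((i : ℕ) + 1)).det
      * (lpsub (Rmat Shalf T) ((i : ℕ) + 1)).det
          ^ ((((t i - nthR t ((i : ℕ) + 1) : ℝ)) : ℂ) - 1)
      = (lpsub (Rmat Shalf T) ((i : ℕ) + 1)).det
          ^ (((t i - nthR t ((i : ℕ) + 1) : ℝ)) : ℂ) := by
    rw [Complex.cpow_sub _ _ (hne i), Complex.cpow_one]
    field_simp
    rw [mul_comm, mul_div_assoc, div_self (hne i), mul_one]
  rw [← hP, ← hd]
  ring
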